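/- Let g : ℝ → ℂ be an integrable function vanishing outside the interval [-1, 1]. If ∫_ℝ exp(i r t) g(t) dt = 0 for every real r > 0, then g = 0 almost everywhere with respect to Lebesgue measure. -/

import Mathlib

open MeasureTheory Complex Filter Metric
open scoped NNReal

section Aux

variable {g : ℝ → ℂ}

private lemma norm_bound_aux (hsupp : ∀ t : ℝ, t ∉ Set.Icc (-1 : ℝ) 1 → g t = 0)
    {R : ℝ} {z : ℂ} (hz : ‖z‖ ≤ R) (n : ℕ) (t : ℝ) :
    ‖(Complex.I * t) ^ n * Complex.exp (Complex.I * z * t) * g t‖ ≤ Real.exp R * ‖g t‖ := by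
  by_cases ht : t ∈ Set.Icc (-1 : ℝ) 1
  · have h1 : |t| ≤ 1 := abs_le.2 ⟨ht.1, ht.2⟩
    have hIt : ‖(Complex.I * (t : ℂ)) ^ n‖ ≤ 1 := by
      rw [norm_pow, norm_mul, Complex.norm_I, one_mul, Complex.norm_real, Real.norm_eq_abs]
      exact pow_le_one₀ (abs_nonneg t) h1
    have hexp : ‖Complex.exp (Complex.I * z * t)‖ ≤ Real.exp R := by
      rw [Complex.norm_exp]
      apply Real.exp_le_exp.2
      calc (Complex.I * z * t).re ≤ |(Complex.I * z * t).re| := le_abs_self _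
        _ ≤ ‖Complex.I * z * t‖ := Complex.abs_re_le_norm _
        _ = ‖z‖ * |t| := by
            rw [norm_mul, norm_mul, Complex.norm_I, one_mul,
              Complex.norm_real, Real.norm_eq_abs]
        _ ≤ R * 1 := mul_le_mul hz h1 (abs_nonneg t) (le_trans (norm_nonneg z) hz)
        _ = R := mul_one R
    calc ‖(Complex.I * t) ^ n * Complex.exp (Complex.I * z * t) * g t‖
        = ‖(Complex.I * (t : ℂ)) ^ n‖ * ‖Complex.exp (Complex.I * z * t)‖ * ‖g t‖ := by
          rw [norm_mul, norm_mul]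
      _ ≤ 1 * Real.exp R * ‖g t‖ := by gcongr
      _ = Real.exp R * ‖g t‖ := by ring
  · rw [hsupp t ht]
    simp

private lemma integrand_integrable (hg : Integrable g volume)
    (hsupp : ∀ t : ℝ, t ∉ Set.Icc (-1 : ℝ) 1 → g t = 0) (n : ℕ) (z : ℂ) :
    Integrable (fun t : ℝ => (Complex.I * t) ^ n * Complex.exp (Complex.I * z * t) * g t)
      volume := by
  refine (hg.norm.const_mul (Real.exp ‖z‖)).mono' ?_
    (Eventually.of_forall fun t => norm_bound_aux hsupp le_rfl n t)
  have hc : Continuous fun t : ℝ => (Complex.I * t) ^ n * Complex.exp (Complex.I * z * t) := by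
    fun_prop
  exact hc.aestronglyMeasurable.mul hg.1

private lemma hasDerivAt_Fn (hg : Integrable g volume)
    (hsupp : ∀ t : ℝ, t ∉ Set.Icc (-1 : ℝ) 1 → g t = 0) (n : ℕ) (z₀ : ℂ) :
    HasDerivAt
      (fun z => ∫ t : ℝ, (Complex.I * t) ^ n * Complex.exp (Complex.I * z * t) * g t)
      (∫ t : ℝ, (Complex.I * t) ^ (n + 1) * Complex.exp (Complex.I * z₀ * t) * g t) z₀ := by
  have key := hasDerivAt_integral_of_dominated_loc_of_deriv_le (μ := volume) (s := ball z₀ 1)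
    (F := fun z (t : ℝ) => (Complex.I * t) ^ n * Complex.exp (Complex.I * z * t) * g t)
    (F' := fun z (t : ℝ) => (Complex.I * t) ^ (n + 1) * Complex.exp (Complex.I * z * t) * g t)
    (bound := fun t => Real.exp (‖z₀‖ + 1) * ‖g t‖) (ball_mem_nhds z₀ one_pos)
    (Eventually.of_forall fun z => (integrand_integrable hg hsupp n z).1)
    (integrand_integrable hg hsupp n z₀)
    (integrand_integrable hg hsupp (n + 1) z₀).1
    ?_ (hg.norm.const_mul _) ?_
  · exact key.2
  · refine Eventually.of_forall fun t => fun z hz => ?_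
    have h1 : ‖z - z₀‖ < 1 := mem_ball_iff_norm.mp hz
    have h2 : ‖z‖ ≤ ‖z₀‖ + 1 := by
      have := norm_sub_norm_le z z₀
      linarith
    exact norm_bound_aux hsupp h2 (n + 1) t
  · refine Eventually.of_forall fun t => fun z hz => ?_
    have h : HasDerivAt (fun z : ℂ => Complex.I * z * t) (Complex.I * t) z := by
      simpa using ((hasDerivAt_id z).const_mul Complex.I).mul_const (t : ℂ)
    have h2 := ((h.cexp).const_mul ((Complex.I * (t : ℂ)) ^ n)).mul_const (g t)
    have heq : (Complex.I * (t : ℂ)) ^ n * (Complex.I * t * Complex.exp (Complex.I * z * t)) * g t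
        = (Complex.I * (t : ℂ)) ^ (n + 1) * Complex.exp (Complex.I * z * t) * g t := by
      rw [pow_succ]; ring
    have heq2 : (Complex.I * (t : ℂ)) ^ n * (Complex.exp (Complex.I * z * t) * (Complex.I * t)) * g t
        = (Complex.I * (t : ℂ)) ^ (n + 1) * Complex.exp (Complex.I * z * t) * g t := by
      rw [pow_succ]; ring
    rw [heq2] at h2
    exact h2

end Aux

set_option maxHeartbeats 1000000 in
/-- If an integrable function `g` supported in `[-1,1]` has Fourier transform
vanishing on the positive half-line, then `g = 0` a.e. -/
theorem ae_zero_of_fourier_vanish_on_ray (g : ℝ → ℂ)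
    (hg : Integrable g volume)
    (hsupp : ∀ t : ℝ, t ∉ Set.Icc (-1 : ℝ) 1 → g t = 0)
    (hvanish : ∀ r : ℝ, 0 < r → ∫ t : ℝ, Complex.exp (Complex.I * r * t) * g t = 0) :
    g =ᵐ[volume] 0 := by
  set Fn : ℕ → ℂ → ℂ :=
    fun n z => ∫ t : ℝ, (Complex.I * t) ^ n * Complex.exp (Complex.I * z * t) * g t with hFn
  have hderiv : ∀ n z, HasDerivAt (Fn n) (Fn (n + 1) z) z := fun n z =>
    hasDerivAt_Fn hg hsupp n z
  have hdiff : Differentiable ℂ (Fn 0) := fun z => (hderiv 0 z).differentiableAt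
  have hzero_pos : ∀ r : ℝ, 0 < r → Fn 0 (r : ℂ) = 0 := by
    intro r hr
    have h := hvanish r hr
    simpa [hFn] using h
  -- identity theorem: Fn 0 vanishes everywhere
  have hA : AnalyticOnNhd ℂ (Fn 0) Set.univ := analyticOnNhd_univ_iff_differentiable.2 hdiff
  have hfreq : ∃ᶠ z in nhdsWithin (1 : ℂ) {(1 : ℂ)}ᶜ, Fn 0 z = 0 := by
    have htendR : Tendsto (fun k : ℕ => (1 + ((k : ℝ) + 1)⁻¹ : ℝ)) atTop (nhds 1) := by
      have : Tendsto (fun k : ℕ => ((k : ℝ) + 1)⁻¹) atTop (nhds 0) :=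
        tendsto_one_div_add_atTop_nhds_zero_nat.congr (by intro n; rw [one_div])
      simpa using tendsto_const_nhds.add this
    have htend : Tendsto (fun k : ℕ => ((1 + ((k : ℝ) + 1)⁻¹ : ℝ) : ℂ)) atTop
        (nhdsWithin (1 : ℂ) {(1 : ℂ)}ᶜ) := by
      apply tendsto_nhdsWithin_of_tendsto_nhds_of_eventually_within
      · have h' := (Complex.continuous_ofReal.tendsto (1 : ℝ)).comp htendR
        rw [Complex.ofReal_one] at h'
        exact h'
      · refine Eventually.of_forall fun k => ?_
        simp only [Set.mem_compl_iff, Set.mem_singleton_iff]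
        intro hc
        have : (1 + ((k : ℝ) + 1)⁻¹ : ℝ) = 1 := by exact_mod_cast hc
        have hk : (0 : ℝ) < ((k : ℝ) + 1)⁻¹ := by positivity
        linarith
    exact htend.frequently (Frequently.of_forall fun k =>
      hzero_pos _ (by positivity))
  have hFn0 : ∀ z, Fn 0 z = 0 := fun z =>
    hA.eqOn_zero_of_preconnected_of_frequently_eq_zero isPreconnected_univ
      (Set.mem_univ 1) hfreq (Set.mem_univ z)
  have hFnall : ∀ n, ∀ z, Fn n z = 0 := by
    intro n
    induction n with
    | zero => exact hFn0
    | succ n ih =>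
      intro z
      have h1 : HasDerivAt (Fn n) (Fn (n + 1) z) z := hderiv n z
      have h2 : Fn n = fun _ => (0 : ℂ) := funext ih
      rw [h2] at h1
      exact ((hasDerivAt_const z (0 : ℂ)).unique h1).symm
  -- moments vanish
  have hmono_int : ∀ n : ℕ, Integrable (fun t : ℝ => ((t : ℂ)) ^ n * g t) volume := by
    intro n
    refine hg.norm.mono' ((Complex.continuous_ofReal.pow n).aestronglyMeasurable.mul hg.1)
      (Eventually.of_forall fun t => ?_)
    by_cases ht : t ∈ Set.Icc (-1 : ℝ) 1
    · have h1 : |t| ≤ 1 := abs_le.2 ⟨ht.1, ht.2⟩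
      rw [norm_mul, norm_pow, Complex.norm_real, Real.norm_eq_abs]
      calc |t| ^ n * ‖g t‖ ≤ 1 * ‖g t‖ := by
            gcongr
            exact pow_le_one₀ (abs_nonneg t) h1
        _ = ‖g t‖ := one_mul _
    · rw [hsupp t ht]
      simp
  have hmom : ∀ n : ℕ, ∫ t : ℝ, ((t : ℂ)) ^ n * g t = 0 := by
    intro n
    have h := hFnall n 0
    simp only [hFn, mul_zero, zero_mul, Complex.exp_zero, mul_one] at h
    have hrw : ∫ t : ℝ, (Complex.I * (t : ℂ)) ^ n * g t
        = Complex.I ^ n * ∫ t : ℝ, ((t : ℂ)) ^ n * g t := by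
      rw [← integral_const_mul]
      congr 1
      funext t
      rw [mul_pow]
      ring
    rw [hrw] at h
    rcases mul_eq_zero.mp h with h' | h'
    · exact absurd h' (pow_ne_zero _ Complex.I_ne_zero)
    · exact h'
  -- polynomials
  have hpoly : ∀ p : Polynomial ℝ, ∫ t : ℝ, ((p.eval t : ℝ) : ℂ) * g t = 0 := by
    intro p
    have hrw : ∀ t : ℝ, ((p.eval t : ℝ) : ℂ) * g t
        = ∑ k ∈ Finset.range (p.natDegree + 1), (p.coeff k : ℂ) * (((t : ℂ)) ^ k * g t) := by
      intro t
      rw [Polynomial.eval_eq_sum_range]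
      push_cast
      rw [Finset.sum_mul]
      exact Finset.sum_congr rfl fun k _ => by ring
    simp only [hrw]
    rw [integral_finset_sum _ (fun k _ => (hmono_int k).const_mul _)]
    refine Finset.sum_eq_zero fun k _ => ?_
    rw [integral_const_mul, hmom k, mul_zero]
  -- continuous test functions: integrability
  have hint : ∀ φ : ℝ → ℝ, Continuous φ →
      Integrable (fun t : ℝ => ((φ t : ℝ) : ℂ) * g t) volume := by
    intro φ hφ
    obtain ⟨C, hC⟩ := isCompact_Icc.exists_bound_of_continuousOn
      (s := Set.Icc (-1 : ℝ) 1) hφ.continuousOn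
    refine (hg.norm.const_mul (max C 0)).mono'
      ((Complex.continuous_ofReal.comp hφ).aestronglyMeasurable.mul hg.1)
      (Eventually.of_forall fun t => ?_)
    by_cases ht : t ∈ Set.Icc (-1 : ℝ) 1
    · rw [norm_mul, Complex.norm_real]
      exact mul_le_mul_of_nonneg_right (le_trans (hC t ht) (le_max_left _ _)) (norm_nonneg _)
    · rw [hsupp t ht]
      simp
  -- continuous test functions: vanishing
  have hcont : ∀ φ : ℝ → ℝ, Continuous φ → ∫ t : ℝ, ((φ t : ℝ) : ℂ) * g t = 0 := by
    intro φ hφ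
    have key : ∀ ε : ℝ, 0 < ε →
        ‖∫ t : ℝ, ((φ t : ℝ) : ℂ) * g t‖ ≤ ε * ∫ t : ℝ, ‖g t‖ := by
      intro ε hε
      obtain ⟨p, hp⟩ := exists_polynomial_near_of_continuousOn (-1) 1 φ hφ.continuousOn ε hε
      have hpc : Continuous fun t : ℝ => p.eval t := p.continuous
      have heq : ∫ t : ℝ, ((φ t : ℝ) : ℂ) * g t
          = ∫ t : ℝ, (((φ t : ℝ) : ℂ) - ((p.eval t : ℝ) : ℂ)) * g t := by
        have hrw : ∀ t : ℝ, (((φ t : ℝ) : ℂ) - ((p.eval t : ℝ) : ℂ)) * g t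
            = ((φ t : ℝ) : ℂ) * g t - ((p.eval t : ℝ) : ℂ) * g t := fun t => by ring
        simp only [hrw]
        rw [integral_sub (hint φ hφ) (hint _ hpc), hpoly p, sub_zero]
      rw [heq]
      calc ‖∫ t : ℝ, (((φ t : ℝ) : ℂ) - ((p.eval t : ℝ) : ℂ)) * g t‖
          ≤ ∫ t : ℝ, ‖(((φ t : ℝ) : ℂ) - ((p.eval t : ℝ) : ℂ)) * g t‖ :=
            norm_integral_le_integral_norm _
        _ ≤ ∫ t : ℝ, ε * ‖g t‖ := by
            refine integral_mono_of_nonneg (Eventually.of_forall fun t => norm_nonneg _)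
              (hg.norm.const_mul ε) (Eventually.of_forall fun t => ?_)
            dsimp only
            by_cases ht : t ∈ Set.Icc (-1 : ℝ) 1
            · rw [norm_mul]
              refine mul_le_mul_of_nonneg_right ?_ (norm_nonneg _)
              have : (((φ t : ℝ) : ℂ) - ((p.eval t : ℝ) : ℂ)) = ((φ t - p.eval t : ℝ) : ℂ) := by
                push_cast; ring
              rw [this, Complex.norm_real, Real.norm_eq_abs, abs_sub_comm]
              exact le_of_lt (hp t ht)
            · rw [hsupp t ht]
              simp
        _ = ε * ∫ t : ℝ, ‖g t‖ := integral_const_mul _ _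
    by_contra hne
    have hN : 0 < ‖∫ t : ℝ, ((φ t : ℝ) : ℂ) * g t‖ := by
      simpa [norm_pos_iff] using hne
    set N := ‖∫ t : ℝ, ((φ t : ℝ) : ℂ) * g t‖ with hNdef
    set A := ∫ t : ℝ, ‖g t‖ with hAdef
    have hA : 0 ≤ A := integral_nonneg fun t => norm_nonneg _
    have hkey := key (N / (2 * (A + 1))) (by positivity)
    have h2 : N / (2 * (A + 1)) * A < N := by
      rw [div_mul_eq_mul_div, div_lt_iff₀ (by positivity)]
      nlinarith
    linarith
  -- closed sets
  have hclosed : ∀ s : Set ℝ, IsClosed s → ∫ t in s, g t = 0 := by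
    intro s hs
    set φn : ℕ → ℝ → ℝ := fun n t => ((hs.apprSeq n t : ℝ≥0) : ℝ) with hφn
    have hφcont : ∀ n, Continuous (φn n) := fun n =>
      NNReal.continuous_coe.comp (hs.apprSeq n).continuous
    have htendsto : Tendsto (fun n => ∫ t : ℝ, ((φn n t : ℝ) : ℂ) * g t) atTop
        (nhds (∫ t : ℝ, (((Set.indicator s (fun _ => (1 : ℝ≥0)) t : ℝ≥0) : ℝ) : ℂ) * g t)) := by
      refine tendsto_integral_of_dominated_convergence (fun t => ‖g t‖)
        (fun n => (Complex.continuous_ofReal.comp (hφcont n)).aestronglyMeasurable.mul hg.1)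
        hg.norm (fun n => Eventually.of_forall fun t => ?_)
        (Eventually.of_forall fun t => ?_)
      · rw [norm_mul, Complex.norm_real, Real.norm_eq_abs]
        have h1 : φn n t ≤ 1 := by
          simpa [hφn] using (HasOuterApproxClosed.apprSeq_apply_le_one hs n t)
        have h0 : 0 ≤ φn n t := NNReal.coe_nonneg _
        calc |φn n t| * ‖g t‖ ≤ 1 * ‖g t‖ := by
              gcongr
              rw [_root_.abs_of_nonneg h0]; exact h1
          _ = ‖g t‖ := one_mul _
      · have hpt : Tendsto (fun n => hs.apprSeq n t) atTop
            (nhds (Set.indicator s (fun _ => (1 : ℝ≥0)) t)) := by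
          have := HasOuterApproxClosed.tendsto_apprSeq hs
          exact (tendsto_pi_nhds.mp this) t
        exact (((Complex.continuous_ofReal.tendsto _).comp
          ((NNReal.continuous_coe.tendsto _).comp hpt)).mul_const (g t))
    have heq0 : ∀ n, ∫ t : ℝ, ((φn n t : ℝ) : ℂ) * g t = 0 := fun n => hcont _ (hφcont n)
    simp only [heq0] at htendsto
    have hlim := tendsto_nhds_unique htendsto tendsto_const_nhds
    have hfun : (fun t : ℝ => (((Set.indicator s (fun _ => (1 : ℝ≥0)) t : ℝ≥0) : ℝ) : ℂ) * g t)
        = s.indicator g := by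
      funext t
      by_cases ht : t ∈ s <;> simp [ht]
    rw [hfun, integral_indicator hs.measurableSet] at hlim
    exact hlim
  exact ae_eq_zero_of_forall_setIntegral_isClosed_eq_zero hg hclosed
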